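/- Let L ⊆ ℝⁿ × ℝⁿ be a Lagrange subspace and let m be the dimension of the projection of L onto the first factor ℝⁿ (the x-component). Then there exist a permutation σ of the coordinates {1,…,n} (applied simultaneously to the x- and p-components) and a symmetric n×n matrix W such that, after permuting coordinates by σ and writing x = (x₁, x₂), p = (p₁, p₂) with x₁, p₁ ∈ ℝᵐ and x₂, p₂ ∈ ℝ^{n−m}, the subspace L is given by L = { (x, p) ∈ ℝⁿ × ℝⁿ : (p₁, −x₂) = W (x₁, p₂) }. -/

import Mathlib

open Matrix

/-- The canonical symplectic form on ℝⁿ × ℝⁿ: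
`J((x₁,p₁),(x₂,p₂)) = p₂ᵀ x₁ − p₁ᵀ x₂`. -/
def sympForm {n : ℕ} (v w : (Fin n → ℝ) × (Fin n → ℝ)) : ℝ :=
  w.2 ⬝ᵥ v.1 - v.2 ⬝ᵥ w.1

/-- A subspace `L ⊆ ℝⁿ × ℝⁿ` is a Lagrange subspace if it equals its orthogonal
companion with respect to the canonical symplectic form. -/
def IsLagrange {n : ℕ} (L : Submodule ℝ ((Fin n → ℝ) × (Fin n → ℝ))) : Prop :=
  ∀ v, v ∈ L ↔ ∀ w ∈ L, sympForm v w = 0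

open Module

noncomputable def sympB (n : ℕ) : LinearMap.BilinForm ℝ ((Fin n → ℝ) × (Fin n → ℝ)) :=
  LinearMap.mk₂ ℝ sympForm
    (fun a b w => by simp [sympForm, dotProduct_add, add_dotProduct]; try ring)
    (fun c a w => by simp [sympForm, dotProduct_smul, smul_dotProduct]; try ring)
    (fun w a b => by simp [sympForm, dotProduct_add, add_dotProduct]; try ring)
    (fun c w a => by simp [sympForm, dotProduct_smul, smul_dotProduct]; try ring)

lemma sympB_apply {n : ℕ} (v w : (Fin n → ℝ) × (Fin n → ℝ)) : sympB n v w = sympForm v w := rfl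

lemma sympB_skew {n : ℕ} (v w : (Fin n → ℝ) × (Fin n → ℝ)) : sympForm w v = - sympForm v w := by
  simp [sympForm, dotProduct_comm]; try ring

lemma sympB_refl {n : ℕ} : (sympB n).IsRefl := by
  intro v w h
  rw [sympB_apply] at *
  rw [sympB_skew, h, neg_zero]

lemma sympB_nondeg {n : ℕ} : (sympB n).Nondegenerate := by
  refine (LinearMap.IsRefl.nondegenerate_iff_separatingLeft sympB_refl).mpr ?_
  intro v h
  have h1 := h (v.2, -v.1)
  rw [sympB_apply] at h1
  simp only [sympForm] at h1
  have h2 : -(v.1 ⬝ᵥ v.1) - v.2 ⬝ᵥ v.2 = 0 := by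
    simpa [neg_dotProduct] using h1
  have n1 : (0:ℝ) ≤ v.1 ⬝ᵥ v.1 := Finset.sum_nonneg fun i _ => mul_self_nonneg _
  have n2 : (0:ℝ) ≤ v.2 ⬝ᵥ v.2 := Finset.sum_nonneg fun i _ => mul_self_nonneg _
  have hp1 : v.1 ⬝ᵥ v.1 = 0 := by nlinarith
  have hp2 : v.2 ⬝ᵥ v.2 = 0 := by nlinarith
  exact Prod.ext (dotProduct_self_eq_zero.mp hp1) (dotProduct_self_eq_zero.mp hp2)

lemma lagrange_finrank {n : ℕ} (L : Submodule ℝ ((Fin n → ℝ) × (Fin n → ℝ)))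
    (hL : IsLagrange L) : Module.finrank ℝ L = n := by
  have hLo : L = (sympB n).orthogonal L := by
    ext v
    rw [LinearMap.BilinForm.mem_orthogonal_iff, hL v]
    constructor
    · intro h w hw
      exact sympB_refl v w (h w hw)
    · intro h w hw
      exact sympB_refl w v (h w hw)
  have := LinearMap.BilinForm.finrank_orthogonal (B := sympB n) sympB_nondeg L
  rw [← hLo] at this
  have hV : Module.finrank ℝ ((Fin n → ℝ) × (Fin n → ℝ)) = n + n := by
    simp [Module.finrank_prod]
  omega


/-- Coordinate selection: for a subspace `X ⊆ ℝⁿ` of dimension `m`, there is a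
permutation `σ` of coordinates such that an element of `X` vanishing on the first
`m` permuted coordinates is zero. -/
lemma exists_perm_coords {n m : ℕ} (X : Submodule ℝ (Fin n → ℝ))
    (hm : m = finrank ℝ X) :
    ∃ σ : Equiv.Perm (Fin n),
      ∀ x ∈ X, (∀ i : Fin n, (i : ℕ) < m → x (σ i) = 0) → x = 0 := by
  classical
  have hmn : m ≤ n := by
    rw [hm]
    simpa using Submodule.finrank_le X
  -- coordinate functionals on X
  set f : Fin n → Module.Dual ℝ X := fun i => (LinearMap.proj i).comp X.subtype with hf
  have hspan : Submodule.span ℝ (Set.range f) = ⊤ := by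
    apply Submodule.eq_top_of_finrank_eq
    have hco : (Submodule.span ℝ (Set.range f)).dualCoannihilator = ⊥ := by
      rw [Submodule.eq_bot_iff]
      intro x hx
      rw [← SetLike.mem_coe, Submodule.coe_dualCoannihilator_span] at hx
      have : ∀ i, (x : Fin n → ℝ) i = 0 := by
        intro i
        exact hx (f i) ⟨i, rfl⟩
      exact Subtype.ext (funext this)
    have := Subspace.finrank_add_finrank_dualCoannihilator_eq
      (Submodule.span ℝ (Set.range f))
    rw [hco, finrank_bot, add_zero] at this
    rw [this, Subspace.dual_finrank_eq]
  obtain ⟨t, hts, htspan, htli⟩ := exists_linearIndependent ℝ (Set.range f)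
  rw [hspan] at htspan
  have htfin : t.Finite := htli.setFinite
  have : Fintype t := htfin.fintype
  -- t is a basis of the dual of X
  let b : Basis t ℝ (Module.Dual ℝ X) := Basis.mk htli (by rw [Subtype.range_coe, htspan])
  have hcard : Fintype.card t = m := by
    rw [← finrank_eq_card_basis b, Subspace.dual_finrank_eq, hm]
  -- choose preimage indices
  have hchoice : ∀ φ : t, ∃ i : Fin n, f i = (φ : Module.Dual ℝ X) := fun φ => hts φ.2
  choose g hg using hchoice
  have hginj : Function.Injective g := by
    intro a b hab
    apply Subtype.ext
    rw [← hg a, ← hg b, hab]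
  set S : Finset (Fin n) := Finset.univ.image g with hS
  have hScard : S.card = m := by
    rw [hS, Finset.card_image_of_injective _ hginj, Finset.card_univ, hcard]
  -- key property of S
  have hkey : ∀ x ∈ X, (∀ j ∈ S, x j = 0) → x = 0 := by
    intro x hx h0
    have hvan : ∀ φ : Module.Dual ℝ X, φ ⟨x, hx⟩ = 0 := by
      intro φ
      have hφ : φ ∈ Submodule.span ℝ t := by rw [htspan]; trivial
      induction hφ using Submodule.span_induction with
      | mem φ hφ =>
        obtain ⟨ψ, hψ⟩ : ∃ ψ : t, (ψ : Module.Dual ℝ X) = φ := ⟨⟨φ, hφ⟩, rfl⟩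
        rw [← hψ, ← hg ψ]
        exact h0 (g ψ) (Finset.mem_image_of_mem g (Finset.mem_univ ψ))
      | zero => simp
      | add φ ψ _ _ h1 h2 => simp [h1, h2]
      | smul c φ _ h1 => simp [h1]
    have : ∀ i, x i = 0 := fun i => hvan (f i)
    exact funext this
  -- the permutation
  have cardA : Fintype.card {i : Fin n // (i : ℕ) < m} = m := by
    have e : {i : Fin n // (i : ℕ) < m} ≃ Fin m :=
      { toFun := fun i => ⟨i.1, i.2⟩
        invFun := fun j => ⟨⟨j.1, j.2.trans_le hmn⟩, j.2⟩
        left_inv := fun i => rfl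
        right_inv := fun j => rfl }
    rw [Fintype.card_congr e, Fintype.card_fin]
  have cardB : Fintype.card {i : Fin n // i ∈ S} = m := by
    rw [Fintype.card_coe, hScard]
  have cardA' : Fintype.card {i : Fin n // ¬ (i : ℕ) < m} =
      Fintype.card {i : Fin n // ¬ i ∈ S} := by
    rw [Fintype.card_subtype_compl, Fintype.card_subtype_compl, cardA, cardB]
  let eA : {i : Fin n // (i : ℕ) < m} ≃ {i : Fin n // i ∈ S} :=
    Fintype.equivOfCardEq (by rw [cardA, cardB])
  let eB : {i : Fin n // ¬ (i : ℕ) < m} ≃ {i : Fin n // ¬ i ∈ S} :=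
    Fintype.equivOfCardEq cardA'
  let σ : Equiv.Perm (Fin n) :=
    ((Equiv.sumCompl fun i : Fin n => (i : ℕ) < m).symm.trans
      ((Equiv.sumCongr eA eB).trans (Equiv.sumCompl fun i : Fin n => i ∈ S)))
  have hσ : ∀ i : Fin n, (i : ℕ) < m ↔ σ i ∈ S := by
    intro i
    by_cases h : (i : ℕ) < m
    · have h1 : (Equiv.sumCompl fun i : Fin n => (i : ℕ) < m).symm i = Sum.inl ⟨i, h⟩ :=
        Equiv.sumCompl_symm_apply_of_pos (p := fun i : Fin n => (i : ℕ) < m) h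
      simp only [σ, Equiv.trans_apply, h1, Equiv.sumCongr_apply, Sum.map_inl,
        Equiv.sumCompl_apply_inl]
      exact iff_of_true h (eA ⟨i, h⟩).2
    · have h1 : (Equiv.sumCompl fun i : Fin n => (i : ℕ) < m).symm i = Sum.inr ⟨i, h⟩ :=
        Equiv.sumCompl_symm_apply_of_neg (p := fun i : Fin n => (i : ℕ) < m) h
      simp only [σ, Equiv.trans_apply, h1, Equiv.sumCongr_apply, Sum.map_inr,
        Equiv.sumCompl_apply_inr]
      exact iff_of_false h (eB ⟨i, h⟩).2
  refine ⟨σ, fun x hx h0 => hkey x hx fun j hj => ?_⟩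
  have : ((σ.symm j : Fin n) : ℕ) < m := by
    rw [hσ]
    simpa using hj
  simpa using h0 (σ.symm j) this


lemma card_lt_subtype {n m : ℕ} (hmn : m ≤ n) :
    Fintype.card {i : Fin n // (i : ℕ) < m} = m := by
  have e : {i : Fin n // (i : ℕ) < m} ≃ Fin m :=
    { toFun := fun i => ⟨i.1, i.2⟩
      invFun := fun j => ⟨⟨j.1, j.2.trans_le hmn⟩, j.2⟩
      left_inv := fun i => rfl
      right_inv := fun j => rfl }
  rw [Fintype.card_congr e, Fintype.card_fin]

lemma perp_eq_zero {n m : ℕ} (X : Submodule ℝ (Fin n → ℝ)) (hm : m = finrank ℝ X)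
    (σ : Equiv.Perm (Fin n))
    (hσ : ∀ x ∈ X, (∀ i : Fin n, (i : ℕ) < m → x (σ i) = 0) → x = 0)
    (p : Fin n → ℝ) (hperp : ∀ x ∈ X, p ⬝ᵥ x = 0)
    (hsupp : ∀ i : Fin n, ¬ (i : ℕ) < m → p (σ i) = 0) : p = 0 := by
  classical
  have hmn : m ≤ n := by
    rw [hm]; simpa using Submodule.finrank_le X
  set r : X →ₗ[ℝ] ({i : Fin n // (i : ℕ) < m} → ℝ) :=
    LinearMap.pi (fun i => (LinearMap.proj (σ i.1)).comp X.subtype) with hr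
  have hinj : Function.Injective r := by
    rw [← LinearMap.ker_eq_bot, Submodule.eq_bot_iff]
    intro x hx
    rw [LinearMap.mem_ker] at hx
    have : (x : Fin n → ℝ) = 0 := by
      apply hσ x x.2
      intro i hi
      exact congrFun hx ⟨i, hi⟩
    exact Subtype.ext this
  have hsurj : Function.Surjective r := by
    have h1 : finrank ℝ (LinearMap.range r) = m := by
      rw [LinearMap.finrank_range_of_inj hinj, hm]
    have h2 : finrank ℝ ({i : Fin n // (i : ℕ) < m} → ℝ) = m := by
      rw [Module.finrank_pi, card_lt_subtype hmn]
    rw [← LinearMap.range_eq_top]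
    exact Submodule.eq_top_of_finrank_eq (by rw [h1, h2])
  obtain ⟨x', hx'⟩ := hsurj (fun i => p (σ i.1))
  have hdot : p ⬝ᵥ (x' : Fin n → ℝ) = 0 := hperp _ x'.2
  have hterm : ∀ i : Fin n, p (σ i) * (x' : Fin n → ℝ) (σ i) =
      if (i : ℕ) < m then p (σ i) * p (σ i) else 0 := by
    intro i
    by_cases h : (i : ℕ) < m
    · have : (x' : Fin n → ℝ) (σ i) = p (σ i) := congrFun hx' ⟨i, h⟩
      rw [this, if_pos h]
    · rw [hsupp i h, if_neg h, zero_mul]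
  have hsum : ∑ i : Fin n, p (σ i) * (x' : Fin n → ℝ) (σ i) = 0 := by
    rw [Equiv.sum_comp σ (fun j => p j * (x' : Fin n → ℝ) j)]
    exact hdot
  rw [Finset.sum_congr rfl (fun i _ => hterm i)] at hsum
  have hzero : ∀ i : Fin n, (i : ℕ) < m → p (σ i) = 0 := by
    intro i hi
    have hnn : ∀ i ∈ Finset.univ, (0:ℝ) ≤ if ((i : Fin n) : ℕ) < m then p (σ i) * p (σ i) else 0 := by
      intro i _
      split_ifs
      · exact mul_self_nonneg _
      · exact le_refl 0
    have := (Finset.sum_eq_zero_iff_of_nonneg hnn).mp hsum i (Finset.mem_univ i)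
    rw [if_pos hi] at this
    exact mul_self_eq_zero.mp this
  funext j
  rcases lt_or_ge ((σ.symm j : Fin n) : ℕ) m with h | h
  · have := hzero (σ.symm j) h
    simpa using this
  · have := hsupp (σ.symm j) (not_lt.mpr h)
    simpa using this


section Main
variable {n : ℕ}

set_option maxHeartbeats 2000000 in
/-- After simultaneously permuting the coordinates of the `x`- and `p`-components by `σ`,
a Lagrange subspace with `m`-dimensional projection onto the first factor is described
by a symmetric generating matrix `W` via `(p₁, −x₂) = W (x₁, p₂)`, where the first `m`
(permuted) coordinates carry `x₁, p₁` and the remaining ones carry `x₂, p₂`. -/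
theorem stmt_10 {n : ℕ} (L : Submodule ℝ ((Fin n → ℝ) × (Fin n → ℝ)))
    (hL : IsLagrange L) (m : ℕ)
    (hm : m = Module.finrank ℝ
      (L.map (LinearMap.fst ℝ (Fin n → ℝ) (Fin n → ℝ)))) :
    ∃ (σ : Equiv.Perm (Fin n)) (W : Matrix (Fin n) (Fin n) ℝ), W.IsSymm ∧
      ∀ x p : Fin n → ℝ,
        ((x, p) ∈ L ↔
          (fun i : Fin n => if (i : ℕ) < m then p (σ i) else -(x (σ i))) =
            W *ᵥ (fun i : Fin n => if (i : ℕ) < m then x (σ i) else p (σ i))) := by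
  classical
  set X := L.map (LinearMap.fst ℝ (Fin n → ℝ) (Fin n → ℝ)) with hX
  obtain ⟨σ, hσ⟩ := exists_perm_coords X hm
  have hfinL : finrank ℝ L = n := lagrange_finrank L hL
  -- the map Φ : L → ℝⁿ, (x,p) ↦ (x₁, p₂) in permuted coordinates
  set Φ : L →ₗ[ℝ] (Fin n → ℝ) :=
    { toFun := fun v => fun i =>
        if (i : ℕ) < m then (v : (Fin n → ℝ) × (Fin n → ℝ)).1 (σ i) else (v : (Fin n → ℝ) × (Fin n → ℝ)).2 (σ i)
      map_add' := by
        intro a b; funext i; by_cases h : (i : ℕ) < m <;> simp [h]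
      map_smul' := by
        intro c a; funext i; by_cases h : (i : ℕ) < m <;> simp [h] } with hΦ
  have hΦ_apply : ∀ (v : L) (i : Fin n), Φ v i =
      if (i : ℕ) < m then (v : (Fin n → ℝ) × (Fin n → ℝ)).1 (σ i) else (v : (Fin n → ℝ) × (Fin n → ℝ)).2 (σ i) := fun v i => rfl
  have hinj : Function.Injective Φ := by
    rw [← LinearMap.ker_eq_bot, Submodule.eq_bot_iff]
    intro v hv
    rw [LinearMap.mem_ker] at hv
    have hx0 : (v : (Fin n → ℝ) × (Fin n → ℝ)).1 = 0 := by
      apply hσ _ ⟨v, v.2, rfl⟩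
      intro i hi
      have := congrFun hv i
      rwa [hΦ_apply, if_pos hi] at this
    have hp0 : (v : (Fin n → ℝ) × (Fin n → ℝ)).2 = 0 := by
      apply perp_eq_zero X hm σ hσ
      · intro x' hx'
        obtain ⟨w, hw, hw1⟩ := hx'
        have h0 := (hL v).mp v.2 w hw
        rw [sympForm] at h0
        rw [hx0] at h0
        simp only [dotProduct_zero] at h0
        rw [← hw1]
        simp only [LinearMap.fst_apply]
        linarith [h0]
      · intro i hi
        have := congrFun hv i
        rwa [hΦ_apply, if_neg hi] at this
    exact Subtype.ext (Prod.ext hx0 hp0)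
  have hsurj : Function.Surjective Φ := by
    have h1 : finrank ℝ (LinearMap.range Φ) = n := by
      rw [LinearMap.finrank_range_of_inj hinj, hfinL]
    rw [← LinearMap.range_eq_top]
    exact Submodule.eq_top_of_finrank_eq (by simp [h1])
  let e : L ≃ₗ[ℝ] (Fin n → ℝ) := LinearEquiv.ofBijective Φ ⟨hinj, hsurj⟩
  have he : ∀ v : L, e v = Φ v := fun v => rfl
  -- the generating map G
  set G : (Fin n → ℝ) →ₗ[ℝ] (Fin n → ℝ) :=
    { toFun := fun u => fun i =>
        if (i : ℕ) < m then ((e.symm u : (Fin n → ℝ) × (Fin n → ℝ))).2 (σ i) else -((e.symm u : (Fin n → ℝ) × (Fin n → ℝ))).1 (σ i)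
      map_add' := by
        intro a b; funext i; by_cases h : (i : ℕ) < m <;> simp [h] <;> ring
      map_smul' := by
        intro c a; funext i; by_cases h : (i : ℕ) < m <;> simp [h] <;> ring } with hG
  have hG_apply : ∀ (u : Fin n → ℝ) (i : Fin n), G u i =
      if (i : ℕ) < m then ((e.symm u : (Fin n → ℝ) × (Fin n → ℝ))).2 (σ i) else -((e.symm u : (Fin n → ℝ) × (Fin n → ℝ))).1 (σ i) :=
    fun u i => rfl
  set W : Matrix (Fin n) (Fin n) ℝ := LinearMap.toMatrix' G with hWdef
  have hW : ∀ u, W *ᵥ u = G u := by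
    intro u
    rw [hWdef, ← Matrix.toLin'_apply, Matrix.toLin'_toMatrix']
  -- the symmetry identity
  have hsym : ∀ u v : Fin n → ℝ, G u ⬝ᵥ v = G v ⬝ᵥ u := by
    intro u v
    set a := e.symm u with ha
    set b := e.symm v with hb
    have hu : ∀ i, u i = if (i : ℕ) < m then (a : (Fin n → ℝ) × (Fin n → ℝ)).1 (σ i) else (a : (Fin n → ℝ) × (Fin n → ℝ)).2 (σ i) := by
      intro i
      conv_lhs => rw [← e.apply_symm_apply u]
      rfl
    have hv : ∀ i, v i = if (i : ℕ) < m then (b : (Fin n → ℝ) × (Fin n → ℝ)).1 (σ i) else (b : (Fin n → ℝ) × (Fin n → ℝ)).2 (σ i) := by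
      intro i
      conv_lhs => rw [← e.apply_symm_apply v]
      rfl
    have hsymp : sympForm (a : (Fin n → ℝ) × (Fin n → ℝ)) (b : (Fin n → ℝ) × (Fin n → ℝ)) = 0 := (hL a).mp a.2 b b.2
    rw [sympForm] at hsymp
    have key : G u ⬝ᵥ v - G v ⬝ᵥ u = 0 := by
      rw [dotProduct, dotProduct, ← Finset.sum_sub_distrib]
      have hterm : ∀ i : Fin n, G u i * v i - G v i * u i =
          (a : (Fin n → ℝ) × (Fin n → ℝ)).2 (σ i) * (b : (Fin n → ℝ) × (Fin n → ℝ)).1 (σ i)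
            - (b : (Fin n → ℝ) × (Fin n → ℝ)).2 (σ i) * (a : (Fin n → ℝ) × (Fin n → ℝ)).1 (σ i) := by
        intro i
        rw [hG_apply, hG_apply, hu, hv, ← ha, ← hb]
        by_cases h : (i : ℕ) < m
        · simp only [if_pos h]
        · simp only [if_neg h]; ring
      rw [Finset.sum_congr rfl (fun i _ => hterm i)]
      rw [Equiv.sum_comp σ (fun j => (a : (Fin n → ℝ) × (Fin n → ℝ)).2 j * (b : (Fin n → ℝ) × (Fin n → ℝ)).1 j
        - (b : (Fin n → ℝ) × (Fin n → ℝ)).2 j * (a : (Fin n → ℝ) × (Fin n → ℝ)).1 j)]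
      rw [Finset.sum_sub_distrib]
      simp only [dotProduct] at hsymp
      linarith [hsymp]
    linarith [key]
  have hWsymm : W.IsSymm := by
    rw [Matrix.IsSymm]
    ext i j
    rw [Matrix.transpose_apply]
    have h1 : W j i = G (Pi.single i 1) j := by
      rw [← congrFun (hW (Pi.single i 1)) j, Matrix.mulVec_single]
      simp
    have h2 : W i j = G (Pi.single j 1) i := by
      rw [← congrFun (hW (Pi.single j 1)) i, Matrix.mulVec_single]
      simp
    have h3 := hsym (Pi.single i 1) (Pi.single j 1)
    rw [dotProduct_single, dotProduct_single, mul_one, mul_one] at h3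
    rw [h1, h2, h3]
  refine ⟨σ, W, hWsymm, ?_⟩
  intro x p
  constructor
  · intro hxp
    set a : L := ⟨(x, p), hxp⟩ with ha
    have hea : e a = fun i : Fin n => if (i : ℕ) < m then x (σ i) else p (σ i) := rfl
    rw [hW]
    funext i
    rw [hG_apply, ← hea, e.symm_apply_apply]
  · intro h
    set u : Fin n → ℝ := fun i : Fin n => if (i : ℕ) < m then x (σ i) else p (σ i) with hu
    set a := e.symm u with ha
    have hΦa : Φ a = u := e.apply_symm_apply u
    have hGu : G u = fun i : Fin n => if (i : ℕ) < m then p (σ i) else -(x (σ i)) := by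
      rw [← hW, ← h]
    have hx : (a : (Fin n → ℝ) × (Fin n → ℝ)).1 = x := by
      funext j
      rcases lt_or_ge ((σ.symm j : Fin n) : ℕ) m with hj | hj
      · have h5 := congrFun hΦa (σ.symm j)
        simp only [hΦ_apply, hu, if_pos hj, Equiv.apply_symm_apply] at h5
        exact h5
      · have h5 := congrFun hGu (σ.symm j)
        simp only [hG_apply, ← ha, if_neg (not_lt.mpr hj), Equiv.apply_symm_apply,
          neg_inj] at h5
        exact h5
    have hp : (a : (Fin n → ℝ) × (Fin n → ℝ)).2 = p := by
      funext j
      rcases lt_or_ge ((σ.symm j : Fin n) : ℕ) m with hj | hj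
      · have h5 := congrFun hGu (σ.symm j)
        simp only [hG_apply, ← ha, if_pos hj, Equiv.apply_symm_apply] at h5
        exact h5
      · have h5 := congrFun hΦa (σ.symm j)
        simp only [hΦ_apply, hu, if_neg (not_lt.mpr hj), Equiv.apply_symm_apply] at h5
        exact h5
    have hxp : ((x, p) : (Fin n → ℝ) × (Fin n → ℝ)) = (a : (Fin n → ℝ) × (Fin n → ℝ)) :=
      Prod.ext hx.symm hp.symm
    rw [hxp]
    exact a.2
end Main
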